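/- Fix R₀ ∈ ℝ and let c : ℝ → ℝ² be the evolvent (coordinate line R = R₀) given by c(ψ) = F(R₀, ψ). Then for every ψ: c′(ψ) = (R₀ − l(ψ))·(cos ψ, −sin ψ), the cross-product expression c′₁(ψ)c″₂(ψ) − c′₂(ψ)c″₁(ψ) equals −(R₀ − l(ψ))², and hence for every ψ with R₀ ≠ l(ψ) the unsigned curvature |c′₁c″₂ − c′₂c″₁| / ‖c′‖³ of c at ψ equals 1/|R₀ − l(ψ)|; that is, the radius of curvature of the evolvent R = R₀ equals |R₀ − l(ψ)|, as asserted in equation (3) of the paper. -/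

import Mathlib

open Real

/-- Equation (9) of the paper: Cartesian coordinates as functions of the
coordinates `(R, ψ)` built from the tangent rays of a basic curve. -/
noncomputable def F (l : ℝ → ℝ) (p : ℝ × ℝ) : ℝ × ℝ :=
  (p.1 * Real.sin p.2 - ∫ t in (0:ℝ)..p.2, l t * Real.cos t,
   p.1 * Real.cos p.2 + ∫ t in (0:ℝ)..p.2, l t * Real.sin t)

/-- The evolvent (coordinate line `R = R₀`). -/
noncomputable def evolvent (l : ℝ → ℝ) (R₀ : ℝ) (ψ : ℝ) : ℝ × ℝ := F l (R₀, ψ)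

lemma hd1 (l : ℝ → ℝ) (hl : ContDiff ℝ 1 l) (R₀ ψ : ℝ) :
    HasDerivAt (fun s => (evolvent l R₀ s).1) ((R₀ - l ψ) * Real.cos ψ) ψ := by
  have hc : Continuous fun t => l t * Real.cos t := hl.continuous.mul Real.continuous_cos
  have hint : HasDerivAt (fun s => ∫ t in (0:ℝ)..s, l t * Real.cos t) (l ψ * Real.cos ψ) ψ :=
    intervalIntegral.integral_hasDerivAt_right (hc.intervalIntegrable _ _)
      (hc.stronglyMeasurableAtFilter _ _) hc.continuousAt
  have h := ((Real.hasDerivAt_sin ψ).const_mul R₀).sub hint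
  rw [show (R₀ - l ψ) * Real.cos ψ = R₀ * Real.cos ψ - l ψ * Real.cos ψ by ring]
  exact h

lemma hd2 (l : ℝ → ℝ) (hl : ContDiff ℝ 1 l) (R₀ ψ : ℝ) :
    HasDerivAt (fun s => (evolvent l R₀ s).2) (-((R₀ - l ψ) * Real.sin ψ)) ψ := by
  have hc : Continuous fun t => l t * Real.sin t := hl.continuous.mul Real.continuous_sin
  have hint : HasDerivAt (fun s => ∫ t in (0:ℝ)..s, l t * Real.sin t) (l ψ * Real.sin ψ) ψ :=
    intervalIntegral.integral_hasDerivAt_right (hc.intervalIntegrable _ _)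
      (hc.stronglyMeasurableAtFilter _ _) hc.continuousAt
  have h := ((Real.hasDerivAt_cos ψ).const_mul R₀).add hint
  rw [show -((R₀ - l ψ) * Real.sin ψ) = R₀ * -Real.sin ψ + l ψ * Real.sin ψ by ring]
  exact h

lemma deriv1 (l : ℝ → ℝ) (hl : ContDiff ℝ 1 l) (R₀ : ℝ) :
    deriv (fun s => (evolvent l R₀ s).1) = fun s => (R₀ - l s) * Real.cos s :=
  funext fun s => (hd1 l hl R₀ s).deriv

lemma deriv2 (l : ℝ → ℝ) (hl : ContDiff ℝ 1 l) (R₀ : ℝ) :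
    deriv (fun s => (evolvent l R₀ s).2) = fun s => -((R₀ - l s) * Real.sin s) :=
  funext fun s => (hd2 l hl R₀ s).deriv

theorem stmt_5 (l : ℝ → ℝ) (hl : ContDiff ℝ 1 l) (R₀ : ℝ) (ψ : ℝ) :
    HasDerivAt (evolvent l R₀) ((R₀ - l ψ) • (Real.cos ψ, -Real.sin ψ)) ψ ∧
    (deriv (fun s => (evolvent l R₀ s).1) ψ *
        deriv (deriv (fun s => (evolvent l R₀ s).2)) ψ -
      deriv (fun s => (evolvent l R₀ s).2) ψ *
        deriv (deriv (fun s => (evolvent l R₀ s).1)) ψ) = -(R₀ - l ψ) ^ 2 ∧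
    (R₀ ≠ l ψ →
      |deriv (fun s => (evolvent l R₀ s).1) ψ *
          deriv (deriv (fun s => (evolvent l R₀ s).2)) ψ -
        deriv (fun s => (evolvent l R₀ s).2) ψ *
          deriv (deriv (fun s => (evolvent l R₀ s).1)) ψ| /
        (Real.sqrt ((deriv (fun s => (evolvent l R₀ s).1) ψ) ^ 2 +
          (deriv (fun s => (evolvent l R₀ s).2) ψ) ^ 2)) ^ 3 = 1 / |R₀ - l ψ|) := by
  have hld : ∀ s, HasDerivAt l (deriv l s) s := fun s =>
    ((hl.differentiable one_ne_zero) s).hasDerivAt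
  -- second derivatives
  have h1'' : HasDerivAt (deriv (fun s => (evolvent l R₀ s).1))
      (-(deriv l ψ) * Real.cos ψ - (R₀ - l ψ) * Real.sin ψ) ψ := by
    rw [deriv1 l hl R₀]
    have := (((hld ψ).const_sub R₀).mul (Real.hasDerivAt_cos ψ))
    exact this.congr_deriv (by ring)
  have h2'' : HasDerivAt (deriv (fun s => (evolvent l R₀ s).2))
      (deriv l ψ * Real.sin ψ - (R₀ - l ψ) * Real.cos ψ) ψ := by
    rw [deriv2 l hl R₀]
    have := (((hld ψ).const_sub R₀).mul (Real.hasDerivAt_sin ψ)).neg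
    exact this.congr_deriv (by ring)
  have e1 : deriv (fun s => (evolvent l R₀ s).1) ψ = (R₀ - l ψ) * Real.cos ψ :=
    (hd1 l hl R₀ ψ).deriv
  have e2 : deriv (fun s => (evolvent l R₀ s).2) ψ = -((R₀ - l ψ) * Real.sin ψ) :=
    (hd2 l hl R₀ ψ).deriv
  have cross : (deriv (fun s => (evolvent l R₀ s).1) ψ *
        deriv (deriv (fun s => (evolvent l R₀ s).2)) ψ -
      deriv (fun s => (evolvent l R₀ s).2) ψ *
        deriv (deriv (fun s => (evolvent l R₀ s).1)) ψ) = -(R₀ - l ψ) ^ 2 := by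
    rw [e1, e2, h1''.deriv, h2''.deriv]
    have := Real.sin_sq_add_cos_sq ψ
    nlinarith [this]
  refine ⟨?_, cross, ?_⟩
  · have := (hd1 l hl R₀ ψ).prodMk (hd2 l hl R₀ ψ)
    refine this.congr_deriv ?_
    simp only [Prod.smul_mk, smul_eq_mul, Prod.mk.injEq]
    exact ⟨trivial, by ring⟩
  · intro hne
    have hne' : R₀ - l ψ ≠ 0 := sub_ne_zero.mpr hne
    rw [cross, e1, e2]
    have hsq : (R₀ - l ψ) * Real.cos ψ * ((R₀ - l ψ) * Real.cos ψ) +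
        -((R₀ - l ψ) * Real.sin ψ) * -((R₀ - l ψ) * Real.sin ψ) = (R₀ - l ψ) ^ 2 := by
      have := Real.sin_sq_add_cos_sq ψ
      nlinarith [this]
    rw [show ((R₀ - l ψ) * Real.cos ψ) ^ 2 + (-((R₀ - l ψ) * Real.sin ψ)) ^ 2
        = (R₀ - l ψ) ^ 2 by nlinarith [Real.sin_sq_add_cos_sq ψ]]
    rw [Real.sqrt_sq_eq_abs, abs_neg, abs_pow, sq_abs]
    have habs : |R₀ - l ψ| ≠ 0 := abs_ne_zero.mpr hne'
    rw [show |R₀ - l ψ| ^ 3 = (R₀ - l ψ) ^ 2 * |R₀ - l ψ| by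
      rw [pow_succ, sq_abs]]
    rw [div_mul_eq_div_div, div_self (pow_ne_zero 2 hne')]
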